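/- Regret bound for the gradient fixed-share rule against compound convex combinations: if the ℓ_t are convex and subdifferentiable on the simplex with subgradients bounded in sup-norm by G, then for every m, max over legal compound convex weight sequences q_1^T with at most m switches of Σ_t (ℓ_t(p_t) - ℓ_t(q_t)) ≤ ((m+1)/η) ln N + (1/η) ln(1/(α^m (1-α)^{T-m-1})) + (η/2) G² T. -/

import Mathlib

set_option maxHeartbeats 1600000

open Finset Real

open Finset Real

/-- Second-order Taylor-type bound: if `f` has first derivative `f1` and `f1` has derivative
bounded by `M` on `[0, b]`, then `f b ≤ f 0 + b * f1 0 + M * b^2 / 2`. -/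
lemma taylor2_bound (f f1 f2 : ℝ → ℝ) (M b : ℝ) (hb : 0 ≤ b)
    (hf : ∀ x, HasDerivAt f (f1 x) x) (hf1 : ∀ x, HasDerivAt f1 (f2 x) x)
    (hM : ∀ x, f2 x ≤ M) : f b ≤ f 0 + b * f1 0 + M * b ^ 2 / 2 := by
  set g1 : ℝ → ℝ := fun x => f1 0 + M * x - f1 x with hg1def
  have hg1d : ∀ x, HasDerivAt g1 (M - f2 x) x := by
    intro x
    have := ((hasDerivAt_const x (f1 0)).fun_add ((hasDerivAt_id x).const_mul M)).fun_sub (hf1 x)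
    simpa [mul_comm] using this
  have hg1mono : MonotoneOn g1 (Set.Icc 0 b) := by
    apply monotoneOn_of_deriv_nonneg (convex_Icc 0 b)
    · exact fun x _ => ((hg1d x).continuousAt).continuousWithinAt
    · exact fun x _ => ((hg1d x).differentiableAt).differentiableWithinAt
    · intro x _
      rw [(hg1d x).deriv]
      linarith [hM x]
  have hg1nonneg : ∀ x ∈ Set.Icc (0:ℝ) b, 0 ≤ g1 x := by
    intro x hx
    have := hg1mono (Set.mem_Icc.2 ⟨le_refl 0, hb⟩) hx hx.1
    simpa [hg1def] using this
  set g : ℝ → ℝ := fun x => f 0 + x * f1 0 + M * x ^ 2 / 2 - f x with hgdef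
  have hgd : ∀ x, HasDerivAt g (g1 x) x := by
    intro x
    have h1 : HasDerivAt (fun x : ℝ => f 0 + x * f1 0 + M * x ^ 2 / 2) (f1 0 + M * x) x := by
      have ha : HasDerivAt (fun x : ℝ => f 0 + x * f1 0) (f1 0) x := by
        simpa using (hasDerivAt_const x (f 0)).fun_add ((hasDerivAt_id x).mul_const (f1 0))
      have hb' : HasDerivAt (fun x : ℝ => M * x ^ 2 / 2) (M * x) x := by
        have := ((hasDerivAt_pow 2 x).const_mul M).div_const 2
        simpa [mul_comm, mul_assoc, mul_div_assoc] using this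
      simpa using ha.fun_add hb'
    simpa [hg1def] using h1.fun_sub (hf x)
  have hgmono : MonotoneOn g (Set.Icc 0 b) := by
    apply monotoneOn_of_deriv_nonneg (convex_Icc 0 b)
    · exact fun x _ => ((hgd x).continuousAt).continuousWithinAt
    · exact fun x _ => ((hgd x).differentiableAt).differentiableWithinAt
    · intro x hx
      rw [(hgd x).deriv]
      exact hg1nonneg x (interior_subset hx)
  have := hgmono (Set.mem_Icc.2 ⟨le_refl 0, hb⟩) (Set.mem_Icc.2 ⟨hb, le_refl b⟩) hb
  simp only [hgdef] at this
  nlinarith [this]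

/-- Finite Hoeffding lemma. -/
lemma hoeffding_finset {ι : Type*} (s : Finset ι) (P x : ι → ℝ) (G η : ℝ)
    (hη : 0 ≤ η) (hP0 : ∀ i ∈ s, 0 ≤ P i) (hP1 : ∑ i ∈ s, P i = 1)
    (hx : ∀ i ∈ s, |x i| ≤ G) :
    Real.log (∑ i ∈ s, P i * Real.exp (-η * x i))
      ≤ -η * ∑ i ∈ s, P i * x i + η ^ 2 * G ^ 2 / 2 := by
  classical
  set F : ℝ → ℝ := fun l => ∑ i ∈ s, P i * Real.exp (-l * x i) with hFdef
  set F1 : ℝ → ℝ := fun l => ∑ i ∈ s, P i * -x i * Real.exp (-l * x i) with hF1def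
  set F2 : ℝ → ℝ := fun l => ∑ i ∈ s, P i * x i ^ 2 * Real.exp (-l * x i) with hF2def
  have hexp : ∀ (i : ι) (l : ℝ), HasDerivAt (fun l : ℝ => Real.exp (-l * x i))
      (-x i * Real.exp (-l * x i)) l := by
    intro i l
    have h := (((hasDerivAt_id l).neg).mul_const (x i)).exp
    simpa [mul_comm] using h
  have hFd : ∀ l, HasDerivAt F (F1 l) l := by
    intro l
    apply HasDerivAt.fun_sum
    intro i hi
    have := ((hexp i l).const_mul (P i))
    simpa [mul_comm, mul_assoc, mul_left_comm] using this
  have hF1d : ∀ l, HasDerivAt F1 (F2 l) l := by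
    intro l
    apply HasDerivAt.fun_sum
    intro i hi
    have := ((hexp i l).const_mul (P i * -x i))
    convert this using 1
    · rfl
    ring
  have hFpos : ∀ l, 0 < F l := by
    intro l
    obtain ⟨i0, hi0, hlt⟩ : ∃ i ∈ s, (0:ℝ) < P i := by
      by_contra h
      push_neg at h
      have : ∑ i ∈ s, P i ≤ 0 := Finset.sum_nonpos fun i hi => h i hi
      rw [hP1] at this; linarith
    have h1 : P i0 * Real.exp (-l * x i0) ≤ F l :=
      Finset.single_le_sum (f := fun i => P i * Real.exp (-l * x i))
        (fun i hi => mul_nonneg (hP0 i hi) (Real.exp_pos _).le) hi0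
    have h2 : 0 < P i0 * Real.exp (-l * x i0) := mul_pos hlt (Real.exp_pos _)
    linarith
  set L : ℝ → ℝ := fun l => Real.log (F l) with hLdef
  set L1 : ℝ → ℝ := fun l => F1 l / F l with hL1def
  set L2 : ℝ → ℝ := fun l => (F2 l * F l - F1 l * F1 l) / F l ^ 2 with hL2def
  have hLd : ∀ l, HasDerivAt L (L1 l) l := fun l => (hFd l).log (hFpos l).ne'
  have hL1d : ∀ l, HasDerivAt L1 (L2 l) l := fun l => (hF1d l).div (hFd l) (hFpos l).ne'
  have hGnn : 0 ≤ G := by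
    rcases Finset.eq_empty_or_nonempty s with h | ⟨i, hi⟩
    · exfalso; rw [h] at hP1; simp at hP1
    · exact le_trans (abs_nonneg _) (hx i hi)
  have hL2le : ∀ l, L2 l ≤ G ^ 2 := by
    intro l
    have hF2le : F2 l ≤ G ^ 2 * F l := by
      rw [hF2def, hFdef, Finset.mul_sum]
      apply Finset.sum_le_sum
      intro i hi
      have hx2 : x i ^ 2 ≤ G ^ 2 := sq_le_sq' (by linarith [abs_le.1 (hx i hi)]) (abs_le.1 (hx i hi)).2
      have := mul_le_mul_of_nonneg_right (mul_le_mul_of_nonneg_left hx2 (hP0 i hi))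
        (Real.exp_pos (-l * x i)).le
      calc P i * x i ^ 2 * Real.exp (-l * x i) ≤ P i * G ^ 2 * Real.exp (-l * x i) := this
        _ = G ^ 2 * (P i * Real.exp (-l * x i)) := by ring
    rw [hL2def, div_le_iff₀ (pow_pos (hFpos l) 2)]
    nlinarith [sq_nonneg (F1 l), (hFpos l), sq_nonneg (F l)]
  have key := taylor2_bound L L1 L2 (G ^ 2) η hη hLd hL1d hL2le
  have hL0 : L 0 = 0 := by
    simp [hLdef, hFdef, hP1]
  have hF0 : F 0 = 1 := by simp [hFdef, hP1]
  have hL10 : L1 0 = -∑ i ∈ s, P i * x i := by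
    simp only [hL1def, hF1def, hF0]
    rw [div_one, ← Finset.sum_neg_distrib]
    apply Finset.sum_congr rfl
    intro i hi
    simp [Real.exp_zero]
  rw [hL0, hL10] at key
  calc Real.log (∑ i ∈ s, P i * Real.exp (-η * x i)) = L η := rfl
    _ ≤ 0 + η * -∑ i ∈ s, P i * x i + G ^ 2 * η ^ 2 / 2 := key
    _ = -η * ∑ i ∈ s, P i * x i + η ^ 2 * G ^ 2 / 2 := by ring


lemma exists_pos_and_le_sum {ι : Type*} [DecidableEq ι] (s : Finset ι) (c v : ι → ℝ)
    (h0 : ∀ i ∈ s, 0 ≤ c i) (h1 : ∑ i ∈ s, c i = 1) :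
    ∃ i ∈ s, 0 < c i ∧ v i ≤ ∑ j ∈ s, c j * v j := by
  classical
  set s' := s.filter (fun i => 0 < c i) with hs'
  have hsum : ∑ i ∈ s', c i = 1 := by
    rw [hs', Finset.sum_filter_of_ne, h1]
    intro i hi hne
    rcases lt_or_eq_of_le (h0 i hi) with h | h
    · exact h
    · exact absurd h.symm hne
  have hne : s'.Nonempty := by
    by_contra h
    rw [Finset.not_nonempty_iff_eq_empty] at h
    rw [h] at hsum; simp at hsum
  obtain ⟨i, hi, hmin⟩ := s'.exists_min_image v hne
  have his : i ∈ s := (Finset.mem_filter.1 hi).1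
  have hci : 0 < c i := (Finset.mem_filter.1 hi).2
  refine ⟨i, his, hci, ?_⟩
  have h2 : ∑ j ∈ s, c j * v j = ∑ j ∈ s', c j * v j := by
    rw [hs', eq_comm]
    apply Finset.sum_filter_of_ne
    intro j hj hne'
    rcases lt_or_eq_of_le (h0 j hj) with h | h
    · exact h
    · exfalso; apply hne'; rw [← h, zero_mul]
  have h3 : ∑ j ∈ s', c j * v i ≤ ∑ j ∈ s', c j * v j := by
    apply Finset.sum_le_sum
    intro j hj
    exact mul_le_mul_of_nonneg_left (hmin j hj) (le_of_lt (Finset.mem_filter.1 hj).2)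
  rw [← Finset.sum_mul, hsum, one_mul] at h3
  linarith [h2 ▸ h3]



/-- Regret bound for the gradient fixed-share rule `F_{η,α}^grad` against compound convex
combinations: if the losses are convex and subdifferentiable on the simplex with subgradients
bounded in sup-norm by `G`, then for every legal sequence of convex weight vectors with at most
`m` switches,
`Σ_t (ℓ_t(p_t) - ℓ_t(q_t)) ≤ ((m+1)/η) ln N + (1/η) ln(1/(α^m (1-α)^{T-m-1})) + (η/2) G² T`. -/
theorem gradient_fixed_share_regret_bound
    (N T m : ℕ) (hN : 0 < N) (hT : 1 ≤ T) (hm : m ≤ T - 1)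
    (η α G : ℝ) (hη : 0 < η) (hα : 0 < α) (hα1 : α < 1) (hG : 0 ≤ G)
    (E : ℕ → Finset (Fin N)) (hE : ∀ t, (E t).Nonempty)
    (ℓ : ℕ → (Fin N → ℝ) → ℝ)
    (hconv : ∀ t, ConvexOn ℝ (stdSimplex ℝ (Fin N)) (ℓ t))
    (p : ℕ → Fin N → ℝ)
    -- `g t` is a subgradient of `ℓ t` at the played point `p t`, bounded by `G`
    (g : ℕ → Fin N → ℝ)
    (hsub : ∀ t, t < T → ∀ x ∈ stdSimplex ℝ (Fin N),
      ℓ t (p t) + ∑ i : Fin N, g t i * (x i - p t i) ≤ ℓ t x)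
    (hGbound : ∀ t i, |g t i| ≤ G)
    -- the fixed-share rule run on the pseudo-losses, i.e. on the values `g t i`
    (w : ℕ → Fin N → ℝ)
    (hw0 : ∀ i, w 0 i = if i ∈ E 0 then (1 : ℝ) / (E 0).card else 0)
    (hupd : ∀ t j, w (t + 1) j =
      if j ∈ E (t + 1) then
        (1 / ((E (t + 1)).card : ℝ)) *
            (∑ i ∈ E t \ E (t + 1), w t i * Real.exp (-η * g t i))
          + (α / ((E (t + 1)).card : ℝ)) *
              (∑ i ∈ E t ∩ E (t + 1), w t i * Real.exp (-η * g t i))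
          + (1 - α) * (if j ∈ E t ∩ E (t + 1) then w t j * Real.exp (-η * g t j) else 0)
      else 0)
    (hpos : ∀ t, 0 < ∑ k ∈ E t, w t k)
    (hp : ∀ t i, p t i = (if i ∈ E t then w t i else 0) / ∑ k ∈ E t, w t k)
    -- a legal compound convex weight sequence with at most `m` switches
    (q : ℕ → Fin N → ℝ)
    (hqsimp : ∀ t, t < T → q t ∈ stdSimplex ℝ (Fin N))
    (hqsupp : ∀ t, t < T → ∀ i, i ∉ E t → q t i = 0)
    (hqsw : ((Finset.Ico 1 T).filter fun t => q (t - 1) ≠ q t).card ≤ m) :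
    ∑ t ∈ Finset.range T, (ℓ t (p t) - ℓ t (q t))
      ≤ ((m : ℝ) + 1) / η * Real.log N
        + (1 / η) * Real.log (1 / (α ^ m * (1 - α) ^ (T - m - 1)))
        + η / 2 * G ^ 2 * T := by
  classical
  classical
  -- basic positivity facts
  have hcard : ∀ t, 0 < ((E t).card : ℝ) := fun t => by
    exact_mod_cast Finset.card_pos.2 (hE t)
  have hcardN : ∀ t, ((E t).card : ℝ) ≤ N := fun t => by
    exact_mod_cast Finset.card_le_univ (E t) |>.trans_eq (by simp)
  have hNR : (0:ℝ) < N := by exact_mod_cast hN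
  -- w is nonnegative
  have hwnn : ∀ t i, 0 ≤ w t i := by
    intro t
    induction t with
    | zero =>
      intro i; rw [hw0]; split
      · positivity
      · exact le_refl 0
    | succ t ih =>
      intro j; rw [hupd]; split
      · have h1 : (0:ℝ) ≤ ∑ i ∈ E t \ E (t+1), w t i * Real.exp (-η * g t i) :=
          Finset.sum_nonneg fun i _ => mul_nonneg (ih i) (Real.exp_pos _).le
        have h2 : (0:ℝ) ≤ ∑ i ∈ E t ∩ E (t+1), w t i * Real.exp (-η * g t i) :=
          Finset.sum_nonneg fun i _ => mul_nonneg (ih i) (Real.exp_pos _).le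
        have h3 : (0:ℝ) ≤ if j ∈ E t ∩ E (t+1) then w t j * Real.exp (-η * g t j) else 0 := by
          split
          · exact mul_nonneg (ih j) (Real.exp_pos _).le
          · exact le_refl 0
        have hc := hcard (t+1)
        have g1 : (0:ℝ) ≤ 1 / ((E (t+1)).card : ℝ) * ∑ i ∈ E t \ E (t + 1), w t i * Real.exp (-η * g t i) :=
          mul_nonneg (by positivity) h1
        have g2 : (0:ℝ) ≤ α / ((E (t+1)).card : ℝ) * ∑ i ∈ E t ∩ E (t + 1), w t i * Real.exp (-η * g t i) :=
          mul_nonneg (by positivity) h2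
        have g3 : (0:ℝ) ≤ (1 - α) * (if j ∈ E t ∩ E (t+1) then w t j * Real.exp (-η * g t j) else 0) :=
          mul_nonneg (by linarith) h3
        linarith
      · exact le_refl 0
  set W : ℕ → ℝ := fun t => ∑ k ∈ E t, w t k with hWdef
  have hWpos : ∀ t, 0 < W t := hpos
  have hW0 : W 0 = 1 := by
    show ∑ k ∈ E 0, w 0 k = 1
    have : ∀ k ∈ E 0, w 0 k = 1 / ((E 0).card : ℝ) := by
      intro k hk; rw [hw0, if_pos hk]
    rw [Finset.sum_congr rfl this, Finset.sum_const, nsmul_eq_mul]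
    field_simp
  -- the total-weight recursion
  have hWrec : ∀ t, W (t+1) = ∑ i ∈ E t, w t i * Real.exp (-η * g t i) := by
    intro t
    have hsplit : ∀ j ∈ E (t+1), w (t+1) j =
        (1 / ((E (t + 1)).card : ℝ)) *
            (∑ i ∈ E t \ E (t + 1), w t i * Real.exp (-η * g t i))
          + (α / ((E (t + 1)).card : ℝ)) *
              (∑ i ∈ E t ∩ E (t + 1), w t i * Real.exp (-η * g t i))
          + (1 - α) * (if j ∈ E t ∩ E (t + 1) then w t j * Real.exp (-η * g t j) else 0) := by
      intro j hj; rw [hupd, if_pos hj]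
    calc W (t+1) = ∑ j ∈ E (t+1), ((1 / ((E (t + 1)).card : ℝ)) *
            (∑ i ∈ E t \ E (t + 1), w t i * Real.exp (-η * g t i))
          + (α / ((E (t + 1)).card : ℝ)) *
              (∑ i ∈ E t ∩ E (t + 1), w t i * Real.exp (-η * g t i))
          + (1 - α) * (if j ∈ E t ∩ E (t + 1) then w t j * Real.exp (-η * g t j) else 0)) :=
        Finset.sum_congr rfl hsplit
      _ = ∑ i ∈ E t, w t i * Real.exp (-η * g t i) := by
        rw [Finset.sum_add_distrib, Finset.sum_const, ← Finset.mul_sum]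
        have hite : ∑ j ∈ E (t+1), (if j ∈ E t ∩ E (t + 1) then w t j * Real.exp (-η * g t j) else 0)
            = ∑ j ∈ E t ∩ E (t+1), w t j * Real.exp (-η * g t j) := by
          rw [Finset.sum_ite_mem]
          congr 1
          rw [Finset.inter_comm]
          exact Finset.inter_eq_left.2 (Finset.inter_subset_right)
        rw [hite]
        have hc : ((E (t+1)).card : ℝ) ≠ 0 := (hcard (t+1)).ne'
        have hsd : ∑ i ∈ E t \ E (t+1), w t i * Real.exp (-η * g t i)
            + ∑ i ∈ E t ∩ E (t+1), w t i * Real.exp (-η * g t i)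
            = ∑ i ∈ E t, w t i * Real.exp (-η * g t i) := by
          rw [add_comm]
          exact Finset.sum_inter_add_sum_sdiff _ _ _
        rw [nsmul_eq_mul]
        have hid : ((E (t+1)).card : ℝ) * (1 / ((E (t+1)).card : ℝ) *
              (∑ i ∈ E t \ E (t+1), w t i * Real.exp (-η * g t i))
            + α / ((E (t+1)).card : ℝ) * (∑ i ∈ E t ∩ E (t+1), w t i * Real.exp (-η * g t i)))
            = (∑ i ∈ E t \ E (t+1), w t i * Real.exp (-η * g t i))
              + α * (∑ i ∈ E t ∩ E (t+1), w t i * Real.exp (-η * g t i)) := by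
          field_simp
        rw [hid]
        linarith [hsd]
  -- per-step bound via Hoeffding
  have hstep : ∀ t, ∑ i, g t i * p t i
      ≤ 1/η * (Real.log (W t) - Real.log (W (t+1))) + η * G^2 / 2 := by
    intro t
    set P : Fin N → ℝ := fun i => w t i / W t with hPdef
    have hP0 : ∀ i ∈ E t, 0 ≤ P i := fun i _ => div_nonneg (hwnn t i) (hWpos t).le
    have hP1 : ∑ i ∈ E t, P i = 1 := by
      rw [hPdef, ← Finset.sum_div]
      exact div_self (hWpos t).ne'
    have hsum : ∑ i, g t i * p t i = ∑ i ∈ E t, P i * g t i := by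
      have h1 : ∀ i, g t i * p t i = if i ∈ E t then P i * g t i else 0 := by
        intro i; rw [hp]; split
        · rw [hPdef]; ring
        · simp
      rw [Finset.sum_congr rfl (fun i _ => h1 i), Finset.sum_ite_mem, Finset.univ_inter]
    have hhoef := hoeffding_finset (E t) P (g t) G η hη.le hP0 hP1 (fun i _ => hGbound t i)
    have hWr : ∑ i ∈ E t, P i * Real.exp (-η * g t i) = W (t+1) / W t := by
      rw [hWrec t, Finset.sum_div]
      apply Finset.sum_congr rfl; intro i _; rw [hPdef]; ring
    rw [hWr, Real.log_div (hWpos (t+1)).ne' (hWpos t).ne'] at hhoef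
    rw [hsum]
    have h2 : η * (∑ i ∈ E t, P i * g t i)
        ≤ (Real.log (W t) - Real.log (W (t+1))) + η^2*G^2/2 := by linarith
    calc ∑ i ∈ E t, P i * g t i = (η * ∑ i ∈ E t, P i * g t i)/η := by field_simp
      _ ≤ ((Real.log (W t) - Real.log (W (t+1))) + η^2*G^2/2)/η := by gcongr
      _ = 1/η * (Real.log (W t) - Real.log (W (t+1))) + η*G^2/2 := by field_simp
  -- telescoping
  have htel : ∑ t ∈ Finset.range T, ∑ i, g t i * p t i
      ≤ 1/η * (0 - Real.log (W T)) + η * G^2 / 2 * T := by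
    have h1 : ∑ t ∈ Finset.range T, ∑ i, g t i * p t i
        ≤ ∑ t ∈ Finset.range T, (1/η * (Real.log (W t) - Real.log (W (t+1))) + η * G^2/2) :=
      Finset.sum_le_sum (fun t _ => hstep t)
    have h2 : ∑ t ∈ Finset.range T, (1/η * (Real.log (W t) - Real.log (W (t+1))) + η*G^2/2)
        = 1/η * (Real.log (W 0) - Real.log (W T)) + η*G^2/2 * T := by
      rw [Finset.sum_add_distrib, ← Finset.mul_sum,
        Finset.sum_range_sub' (fun t => Real.log (W t)), Finset.sum_const,
        Finset.card_range, nsmul_eq_mul]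
      ring
    rw [hW0, Real.log_one] at h2
    linarith [h1, h2]
  -- the switch-counting function for `q`
  set r : ℕ → ℕ := fun t => ((Finset.Ico 1 (t+1)).filter (fun u => q (u-1) ≠ q u)).card
    with hrdef
  have hrrec : ∀ t, r (t+1) = if q t ≠ q (t+1) then r t + 1 else r t := by
    intro t
    have hins : Finset.Ico 1 (t+1+1) = insert (t+1) (Finset.Ico 1 (t+1)) :=
      Nat.Ico_succ_right_eq_insert_Ico (by omega)
    rw [hrdef]
    simp only
    rw [hins, Finset.filter_insert]
    by_cases h : q t ≠ q (t+1)
    · rw [if_pos (by simpa using h), if_pos h, Finset.card_insert_of_notMem]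
      intro hmem
      rw [Finset.mem_filter, Finset.mem_Ico] at hmem
      omega
    · rw [if_neg (by simpa using h), if_neg h]
  have hrmono : Monotone r := monotone_nat_of_le_succ (fun t => by rw [hrrec t]; split <;> omega)
  have hrq : ∀ t t', t ≤ t' → r t = r t' → q t = q t' := by
    intro t t' hle
    induction hle with
    | refl => intro _; rfl
    | @step t' h ih =>
      intro heq
      have h1 : r t ≤ r t' := hrmono h
      have h2 : r t' ≤ r (t'+1) := hrmono (Nat.le_succ t')
      have h3 : r t = r t' := le_antisymm h1 (by rw [heq]; exact h2)
      have h4 : r t' = r (t'+1) := le_antisymm h2 (by rw [← heq]; exact h1)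
      have h5 : q t' = q (t'+1) := by
        by_contra hne
        rw [hrrec t', if_pos hne] at h4
        exact absurd h4 (Nat.ne_of_lt (Nat.lt_succ_self _))
      rw [ih h3, h5]
  -- choose a representative expert for each block
  have hIk : ∀ k : ℕ, ∃ i : Fin N, (∀ t, t < T → r t = k → 0 < q t i) ∧
      (∑ u ∈ (Finset.range T).filter (fun u => r u = k), g u i)
        ≤ ∑ u ∈ (Finset.range T).filter (fun u => r u = k), ∑ j, q u j * g u j := by
    intro k
    set B := (Finset.range T).filter (fun u => r u = k) with hBdef
    rcases B.eq_empty_or_nonempty with hBe | hBne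
    · refine ⟨⟨0, hN⟩, ?_, ?_⟩
      · intro t ht hrt
        exfalso
        have hmem : t ∈ B := by rw [hBdef]; simp [ht, hrt, Finset.mem_filter]
        rw [hBe] at hmem; simp at hmem
      · rw [hBe]; simp
    · set t0 := B.min' hBne with ht0def
      have ht0B : t0 ∈ B := B.min'_mem hBne
      have ht0T : t0 < T := by
        have h := ht0B; rw [hBdef, Finset.mem_filter, Finset.mem_range] at h; exact h.1
      have ht0r : r t0 = k := by
        have h := ht0B; rw [hBdef, Finset.mem_filter] at h; exact h.2
      have hsimp := hqsimp t0 ht0T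
      obtain ⟨i, _, hip, hile⟩ := exists_pos_and_le_sum Finset.univ (q t0)
        (fun i => ∑ u ∈ B, g u i) (fun i _ => hsimp.1 i) hsimp.2
      have hqeq : ∀ u ∈ B, q u = q t0 := by
        intro u huB
        have hur : r u = k := by
          have h := huB; rw [hBdef, Finset.mem_filter] at h; exact h.2
        exact (hrq t0 u (B.min'_le u huB) (by rw [ht0r, hur])).symm
      refine ⟨i, ?_, ?_⟩
      · intro t ht hrt
        have htB : t ∈ B := by rw [hBdef]; simp [ht, hrt, Finset.mem_filter]
        rw [hqeq t htB]; exact hip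
      · have h1 : ∑ j, q t0 j * (∑ u ∈ B, g u j) = ∑ u ∈ B, ∑ j, q t0 j * g u j := by
          simp_rw [Finset.mul_sum]
          rw [Finset.sum_comm]
        calc ∑ u ∈ B, g u i ≤ ∑ j, q t0 j * (∑ u ∈ B, g u j) := hile
          _ = ∑ u ∈ B, ∑ j, q t0 j * g u j := h1
          _ = ∑ u ∈ B, ∑ j, q u j * g u j := by
            apply Finset.sum_congr rfl; intro u huB; rw [hqeq u huB]
  choose I hIpos hIle using hIk
  set σ : ℕ → Fin N := fun t => I (r t) with hσdef
  have hσq : ∀ t, t < T → 0 < q t (σ t) := fun t ht => hIpos (r t) t ht rfl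
  have hσE : ∀ t, t < T → σ t ∈ E t := by
    intro t ht
    by_contra hmem
    exact (hσq t ht).ne' (hqsupp t ht _ hmem)
  have hσloss : ∑ t ∈ Finset.range T, g t (σ t) ≤ ∑ t ∈ Finset.range T, ∑ j, q t j * g t j := by
    have hmap : ∀ u ∈ Finset.range T, r u ∈ (Finset.range T).image r :=
      fun u hu => Finset.mem_image_of_mem r hu
    rw [← Finset.sum_fiberwise_of_maps_to hmap (fun u => g u (σ u)),
        ← Finset.sum_fiberwise_of_maps_to hmap (fun u => ∑ j, q u j * g u j)]
    apply Finset.sum_le_sum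
    intro k _
    have heq : ∑ u ∈ (Finset.range T).filter (fun u => r u = k), g u (σ u)
        = ∑ u ∈ (Finset.range T).filter (fun u => r u = k), g u (I k) := by
      apply Finset.sum_congr rfl
      intro u hu
      have hru : r u = k := (Finset.mem_filter.1 hu).2
      rw [hσdef]; simp only; rw [hru]
    rw [heq]
    exact hIle k
  have hσsw : ((Finset.Ico 1 T).filter (fun t => σ (t-1) ≠ σ t)).card ≤ m := by
    refine le_trans (Finset.card_le_card ?_) hqsw
    intro t ht
    rw [Finset.mem_filter] at ht ⊢
    refine ⟨ht.1, ?_⟩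
    intro hqe
    apply ht.2
    have h1 : 1 ≤ t := (Finset.mem_Ico.1 ht.1).1
    have h2 : t - 1 + 1 = t := by omega
    have h3 := hrrec (t-1)
    rw [h2] at h3
    rw [if_neg (fun hne => hne hqe)] at h3
    show σ (t-1) = σ t
    rw [hσdef]; simp only; rw [h3]
  -- choose a set of exactly `m` charged steps
  obtain ⟨S, hDS, hSsub, hScard⟩ := Finset.exists_subsuperset_card_eq
    (Finset.filter_subset (fun t => σ (t-1) ≠ σ t) (Finset.Ico 1 T)) hσsw
    (by rw [Nat.card_Ico]; exact hm)
  set c : ℕ → ℕ := fun t => (S ∩ Finset.Icc 1 t).card with hcdef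
  have hcrec : ∀ t, c (t+1) = if t+1 ∈ S then c t + 1 else c t := by
    intro t
    have hicc : Finset.Icc 1 (t+1) = insert (t+1) (Finset.Icc 1 t) := by
      ext u; simp only [Finset.mem_Icc, Finset.mem_insert]; omega
    rw [hcdef]; simp only
    rw [hicc]
    by_cases hS : t+1 ∈ S
    · rw [Finset.inter_insert_of_mem hS, if_pos hS, Finset.card_insert_of_notMem]
      intro hmem
      rw [Finset.mem_inter, Finset.mem_Icc] at hmem
      omega
    · rw [Finset.inter_insert_of_notMem hS, if_neg hS]
  have hcle : ∀ t, c t ≤ t := by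
    intro t
    calc c t ≤ (Finset.Icc 1 t).card := Finset.card_le_card Finset.inter_subset_right
      _ = t := by rw [Nat.card_Icc]; omega
  set ρ : ℕ → ℝ := fun t => (1/(N:ℝ)) * (α/N)^(c t) * (1-α)^(t - c t)
      * Real.exp (-η * ∑ u ∈ Finset.range t, g u (σ u)) with hρdef
  have hρpos : ∀ t, 0 < ρ t := by
    intro t; rw [hρdef]; simp only
    have h1 : (0:ℝ) < α/N := by positivity
    have h2 : (0:ℝ) < 1 - α := by linarith
    positivity
  have hwlb : ∀ t, t < T → ρ t ≤ w t (σ t) := by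
    intro t
    induction t with
    | zero =>
      intro ht
      have hc0 : c 0 = 0 := by
        rw [hcdef]; simp
      have hρ0 : ρ 0 = 1/(N:ℝ) := by rw [hρdef]; simp [hc0]
      rw [hρ0, hw0, if_pos (hσE 0 ht)]
      exact one_div_le_one_div_of_le (hcard 0) (hcardN 0)
    | succ t ih =>
      intro ht1
      have ht : t < T := by omega
      have hwt := ih ht
      have hσt : σ t ∈ E t := hσE t ht
      have hσt1 : σ (t+1) ∈ E (t+1) := hσE (t+1) ht1
      rw [hupd t (σ (t+1)), if_pos hσt1]
      set S1 := ∑ i ∈ E t \ E (t+1), w t i * Real.exp (-η * g t i) with hS1def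
      set S2 := ∑ i ∈ E t ∩ E (t+1), w t i * Real.exp (-η * g t i) with hS2def
      have hS1nn : 0 ≤ S1 := Finset.sum_nonneg fun i _ => mul_nonneg (hwnn t i) (Real.exp_pos _).le
      have hS2nn : 0 ≤ S2 := Finset.sum_nonneg fun i _ => mul_nonneg (hwnn t i) (Real.exp_pos _).le
      have hwe : 0 ≤ w t (σ t) * Real.exp (-η * g t (σ t)) :=
        mul_nonneg (hwnn t _) (Real.exp_pos _).le
      have hexp : Real.exp (-η * ∑ u ∈ Finset.range (t+1), g u (σ u))
          = Real.exp (-η * ∑ u ∈ Finset.range t, g u (σ u)) * Real.exp (-η * g t (σ t)) := by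
        rw [← Real.exp_add, Finset.sum_range_succ]; ring_nf
      by_cases hS : t+1 ∈ S
      · have hρ1 : ρ (t+1) = (α/N) * (ρ t * Real.exp (-η * g t (σ t))) := by
          rw [hρdef]; simp only
          rw [hcrec t, if_pos hS, hexp]
          have h1 : t + 1 - (c t + 1) = t - c t := by omega
          rw [h1]; ring
        have hthird : 0 ≤ (1-α) * (if σ (t+1) ∈ E t ∩ E (t+1)
            then w t (σ (t+1)) * Real.exp (-η * g t (σ (t+1))) else 0) := by
          apply mul_nonneg (by linarith)
          split
          · exact mul_nonneg (hwnn t _) (Real.exp_pos _).le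
          · exact le_refl 0
        have hmain : (α/(N:ℝ)) * (w t (σ t) * Real.exp (-η * g t (σ t)))
            ≤ 1/((E (t+1)).card : ℝ) * S1 + α/((E (t+1)).card : ℝ) * S2 := by
          by_cases hmem : σ t ∈ E (t+1)
          · have h1 : w t (σ t) * Real.exp (-η * g t (σ t)) ≤ S2 :=
              Finset.single_le_sum (f := fun i => w t i * Real.exp (-η * g t i))
                (fun i _ => mul_nonneg (hwnn t i) (Real.exp_pos _).le)
                (Finset.mem_inter.2 ⟨hσt, hmem⟩)
            have h2 : α/(N:ℝ) ≤ α/((E (t+1)).card : ℝ) := by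
              rw [div_eq_mul_one_div, div_eq_mul_one_div α ((E (t+1)).card : ℝ)]
              exact mul_le_mul_of_nonneg_left
                (one_div_le_one_div_of_le (hcard _) (hcardN _)) hα.le
            have h3 : 0 ≤ 1/((E (t+1)).card : ℝ) * S1 := mul_nonneg (by positivity) hS1nn
            have h4 : (α/(N:ℝ)) * (w t (σ t) * Real.exp (-η * g t (σ t)))
                ≤ (α/((E (t+1)).card : ℝ)) * S2 := by
              calc (α/(N:ℝ)) * (w t (σ t) * Real.exp (-η * g t (σ t)))
                  ≤ (α/((E (t+1)).card : ℝ)) * (w t (σ t) * Real.exp (-η * g t (σ t))) :=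
                    mul_le_mul_of_nonneg_right h2 hwe
                _ ≤ (α/((E (t+1)).card : ℝ)) * S2 :=
                    mul_le_mul_of_nonneg_left h1 (by positivity)
            linarith
          · have h1 : w t (σ t) * Real.exp (-η * g t (σ t)) ≤ S1 :=
              Finset.single_le_sum (f := fun i => w t i * Real.exp (-η * g t i))
                (fun i _ => mul_nonneg (hwnn t i) (Real.exp_pos _).le)
                (Finset.mem_sdiff.2 ⟨hσt, hmem⟩)
            have h2 : α/(N:ℝ) ≤ 1/((E (t+1)).card : ℝ) := by
              have ha : α/(N:ℝ) ≤ 1/(N:ℝ) := by gcongr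
              exact ha.trans (one_div_le_one_div_of_le (hcard _) (hcardN _))
            have h3 : 0 ≤ α/((E (t+1)).card : ℝ) * S2 := mul_nonneg (by positivity) hS2nn
            have h4 : (α/(N:ℝ)) * (w t (σ t) * Real.exp (-η * g t (σ t)))
                ≤ (1/((E (t+1)).card : ℝ)) * S1 := by
              calc (α/(N:ℝ)) * (w t (σ t) * Real.exp (-η * g t (σ t)))
                  ≤ (1/((E (t+1)).card : ℝ)) * (w t (σ t) * Real.exp (-η * g t (σ t))) :=
                    mul_le_mul_of_nonneg_right h2 hwe
                _ ≤ (1/((E (t+1)).card : ℝ)) * S1 :=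
                    mul_le_mul_of_nonneg_left h1 (by positivity)
            linarith
        have hchain : ρ (t+1) ≤ 1/((E (t+1)).card : ℝ) * S1 + α/((E (t+1)).card : ℝ) * S2 := by
          rw [hρ1]
          calc (α/(N:ℝ)) * (ρ t * Real.exp (-η * g t (σ t)))
              ≤ (α/(N:ℝ)) * (w t (σ t) * Real.exp (-η * g t (σ t))) :=
                mul_le_mul_of_nonneg_left
                  (mul_le_mul_of_nonneg_right hwt (Real.exp_pos _).le) (by positivity)
            _ ≤ _ := hmain
        linarith
      · have hσeq : σ t = σ (t+1) := by
          by_contra hne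
          apply hS
          apply hDS
          rw [Finset.mem_filter]
          refine ⟨Finset.mem_Ico.2 ⟨by omega, ht1⟩, ?_⟩
          simpa using hne
        have hρ1 : ρ (t+1) = (1-α) * (ρ t * Real.exp (-η * g t (σ t))) := by
          rw [hρdef]; simp only
          rw [hcrec t, if_neg hS, hexp]
          have h1 : t + 1 - c t = (t - c t) + 1 := by have := hcle t; omega
          rw [h1]; ring
        have hmem : σ (t+1) ∈ E t ∩ E (t+1) := Finset.mem_inter.2 ⟨hσeq ▸ hσt, hσt1⟩
        rw [if_pos hmem, hρ1, ← hσeq]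
        have h1 : (1-α) * (ρ t * Real.exp (-η * g t (σ t)))
            ≤ (1-α) * (w t (σ t) * Real.exp (-η * g t (σ t))) := by
          apply mul_le_mul_of_nonneg_left _ (by linarith)
          exact mul_le_mul_of_nonneg_right hwt (Real.exp_pos _).le
        have h2 : 0 ≤ 1/((E (t+1)).card:ℝ) * S1 := mul_nonneg (by positivity) hS1nn
        have h3 : 0 ≤ α/((E (t+1)).card:ℝ) * S2 := mul_nonneg (by positivity) hS2nn
        linarith
  -- lower bound on the final total weight
  set L : ℝ := ∑ u ∈ Finset.range T, g u (σ u) with hLdef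
  have hTT : T - 1 < T := by omega
  have hT1 : T - 1 + 1 = T := by omega
  have h2 : w (T-1) (σ (T-1)) * Real.exp (-η * g (T-1) (σ (T-1))) ≤ W T := by
    have hrec := hWrec (T-1)
    rw [hT1] at hrec
    rw [hrec]
    exact Finset.single_le_sum (f := fun i => w (T-1) i * Real.exp (-η * g (T-1) i))
      (fun i _ => mul_nonneg (hwnn _ i) (Real.exp_pos _).le) (hσE (T-1) hTT)
  have hcT : c (T-1) = m := by
    rw [hcdef]; simp only
    have hSeq : S ∩ Finset.Icc 1 (T-1) = S := Finset.inter_eq_left.2 (by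
      intro x hx
      have hx2 := hSsub hx
      rw [Finset.mem_Ico] at hx2
      rw [Finset.mem_Icc]
      omega)
    rw [hSeq, hScard]
  have hρT : ρ (T-1) * Real.exp (-η * g (T-1) (σ (T-1)))
      = (1/(N:ℝ))*(α/N)^m*(1-α)^(T-1-m)*Real.exp (-η * L) := by
    rw [hρdef]; simp only [hcT]
    have hLsplit : L = ∑ u ∈ Finset.range (T-1), g u (σ u) + g (T-1) (σ (T-1)) := by
      rw [hLdef, ← Finset.sum_range_succ, hT1]
    rw [hLsplit, show -η * (∑ u ∈ Finset.range (T-1), g u (σ u) + g (T-1) (σ (T-1)))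
        = -η * ∑ u ∈ Finset.range (T-1), g u (σ u) + -η * g (T-1) (σ (T-1)) from by ring,
      Real.exp_add]
    ring
  have hRW : (1/(N:ℝ))*(α/N)^m*(1-α)^(T-1-m)*Real.exp (-η * L) ≤ W T := by
    calc (1/(N:ℝ))*(α/N)^m*(1-α)^(T-1-m)*Real.exp (-η * L)
        = ρ (T-1) * Real.exp (-η * g (T-1) (σ (T-1))) := hρT.symm
      _ ≤ w (T-1) (σ (T-1)) * Real.exp (-η * g (T-1) (σ (T-1))) :=
          mul_le_mul_of_nonneg_right (hwlb (T-1) hTT) (Real.exp_pos _).le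
      _ ≤ W T := h2
  have h1α : (0:ℝ) < 1 - α := by linarith
  have hRpos : (0:ℝ) < (1/(N:ℝ))*(α/N)^m*(1-α)^(T-1-m)*Real.exp (-η * L) := by positivity
  have hlogW : -Real.log (W T) ≤ ((m:ℝ)+1) * Real.log N - (m:ℝ) * Real.log α
      - ((T-1-m:ℕ):ℝ) * Real.log (1-α) + η * L := by
    have hlog := Real.log_le_log hRpos hRW
    have hlogR : Real.log ((1/(N:ℝ))*(α/N)^m*(1-α)^(T-1-m)*Real.exp (-η * L))
        = -Real.log N + (m:ℝ) * (Real.log α - Real.log N)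
          + ((T-1-m:ℕ):ℝ) * Real.log (1-α) + (-η * L) := by
      rw [Real.log_mul (by positivity) (Real.exp_pos _).ne', Real.log_mul (by positivity)
          (by positivity), Real.log_mul (by positivity) (by positivity), Real.log_pow,
          Real.log_pow, Real.log_exp, one_div, Real.log_inv,
          Real.log_div hα.ne' hNR.ne']
      try push_cast
      try ring
    rw [hlogR] at hlog
    linarith
  -- the gradient step
  have hgrad : ∀ t ∈ Finset.range T, ℓ t (p t) - ℓ t (q t) ≤ ∑ i, g t i * (p t i - q t i) := by
    intro t ht
    rw [Finset.mem_range] at ht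
    have hs := hsub t ht (q t) (hqsimp t ht)
    have hsum2 : ∑ i, g t i * (q t i - p t i) = -∑ i, g t i * (p t i - q t i) := by
      rw [← Finset.sum_neg_distrib]
      apply Finset.sum_congr rfl; intro i _; ring
    rw [hsum2] at hs
    linarith
  -- final assembly
  have hqg : ∑ t ∈ Finset.range T, g t (σ t) ≤ ∑ t ∈ Finset.range T, ∑ j, q t j * g t j :=
    hσloss
  have hmTm : T - m - 1 = T - 1 - m := by omega
  rw [hmTm]
  calc ∑ t ∈ Finset.range T, (ℓ t (p t) - ℓ t (q t))
      ≤ ∑ t ∈ Finset.range T, ∑ i, g t i * (p t i - q t i) := Finset.sum_le_sum hgrad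
    _ = ∑ t ∈ Finset.range T, ∑ i, g t i * p t i
        - ∑ t ∈ Finset.range T, ∑ j, q t j * g t j := by
      rw [← Finset.sum_sub_distrib]
      apply Finset.sum_congr rfl
      intro t _
      rw [← Finset.sum_sub_distrib]
      apply Finset.sum_congr rfl
      intro i _
      ring
    _ ≤ ∑ t ∈ Finset.range T, ∑ i, g t i * p t i - L := by
      rw [hLdef]; linarith [hqg]
    _ ≤ (1/η * (0 - Real.log (W T)) + η * G^2/2*T) - L := by linarith [htel]
    _ ≤ ((m : ℝ) + 1) / η * Real.log N
        + (1 / η) * Real.log (1 / (α ^ m * (1 - α) ^ (T - 1 - m)))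
        + η / 2 * G ^ 2 * T := by
      have h5 : 1/η * (0 - Real.log (W T))
          ≤ 1/η * (((m:ℝ)+1) * Real.log N - (m:ℝ) * Real.log α
            - ((T-1-m:ℕ):ℝ) * Real.log (1-α) + η * L) := by
        apply mul_le_mul_of_nonneg_left _ (by positivity)
        linarith [hlogW]
      have hlogR2 : Real.log (1/(α^m * (1-α)^(T-1-m)))
          = -((m:ℝ) * Real.log α + ((T-1-m:ℕ):ℝ) * Real.log (1-α)) := by
        rw [one_div, Real.log_inv, Real.log_mul (by positivity) (by positivity),
          Real.log_pow, Real.log_pow]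
        try push_cast
        try ring
      rw [hlogR2]
      have hid : 1/η * (((m:ℝ)+1) * Real.log N - (m:ℝ) * Real.log α
            - ((T-1-m:ℕ):ℝ) * Real.log (1-α) + η * L)
          = ((m:ℝ)+1)/η * Real.log N
            + 1/η * (-((m:ℝ) * Real.log α + ((T-1-m:ℕ):ℝ) * Real.log (1-α))) + L := by
        field_simp
        ring
      rw [hid] at h5
      have hGT : η * G^2/2*T = η/2*G^2*T := by ring
      linarith
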